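/- arXiv:1403.0609 — 2 statements merged into one kernel-verified Lean document; each statement's English description precedes it below -/
import Mathlib

section
/- Let U ⊆ ℝ^p be open and convex, let w : [0,1] → [0,∞) be continuous, let f, f₀ : [0,1] → ℝ be continuously differentiable, let θ, θ₀ ∈ U, and let F : [0,1] × ℝ × U → ℝ be twice continuously differentiable in all arguments. Define S(t, y, η) = ∇_θF(t, y, η) · (f₀′(t) − F(t, f₀(t), θ₀)) ∈ ℝ^p, let D_θS denote its p×p Jacobian in η, and set M(f, θ) = ∫₀¹ ∇_θF(t, f(t), θ) (∫₀¹ ∇_θF(t, f(t), θ + λ(θ₀ − θ)) dλ)ᵀ w(t) dt − ∫₀¹ (∫₀¹ D_θS(t, f(t), θ₀ + λ(θ − θ₀)) dλ) w(t) dt. Suppose the two first-order conditions hold: ∫₀¹ ∇_θF(t, f(t), θ)(f′(t) − F(t, f(t), θ)) w(t) dt = 0 and ∫₀¹ ∇_θF(t, f₀(t), θ₀)(f₀′(t) − F(t, f₀(t), θ₀)) w(t) dt = 0. Then M(f, θ)(θ − θ₀) = T₁ + T₂ + T₃, where T₁ = ∫₀¹ (∇_θF(t, f(t), θ₀) − ∇_θF(t,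 f₀(t), θ₀)) (f₀′(t) − F(t, f₀(t), θ₀)) w(t) dt, T₂ = ∫₀¹ ∇_θF(t, f(t), θ) (f′(t) − f₀′(t)) w(t) dt, and T₃ = ∫₀¹ ∇_θF(t, f(t), θ) (F(t, f₀(t), θ₀) − F(t, f(t), θ₀)) w(t) dt. -/
open MeasureTheory Set
open scoped RealInnerProductSpace


private lemma grad_repr (p : ℕ) (U : Set (EuclideanSpace ℝ (Fin p)))
    (hUopen : IsOpen U)
    (F : ℝ → ℝ → EuclideanSpace ℝ (Fin p) → ℝ)
    (hF : ContDiffOn ℝ 2 (fun q : ℝ × ℝ × EuclideanSpace ℝ (Fin p) => F q.1 q.2.1 q.2.2)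
      (Icc (0:ℝ) 1 ×ˢ (univ : Set ℝ) ×ˢ U))
    (Fθ : ℝ → ℝ → EuclideanSpace ℝ (Fin p) → EuclideanSpace ℝ (Fin p))
    (hFθ : ∀ t ∈ Icc (0:ℝ) 1, ∀ y : ℝ, ∀ η ∈ U,
      HasGradientAt (fun η' => F t y η') (Fθ t y η) η) :
    ∃ Φ : ℝ × ℝ × EuclideanSpace ℝ (Fin p) → EuclideanSpace ℝ (Fin p),
      ContDiffOn ℝ 1 Φ (Icc (0:ℝ) 1 ×ˢ (univ : Set ℝ) ×ˢ U) ∧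
      ∀ t ∈ Icc (0:ℝ) 1, ∀ y : ℝ, ∀ η ∈ U, Φ (t, y, η) = Fθ t y η := by
  set S : Set (ℝ × ℝ × EuclideanSpace ℝ (Fin p)) := Icc (0:ℝ) 1 ×ˢ (univ : Set ℝ) ×ˢ U with hS
  set Fj : ℝ × ℝ × EuclideanSpace ℝ (Fin p) → ℝ := fun q => F q.1 q.2.1 q.2.2 with hFj
  have hSud : UniqueDiffOn ℝ S :=
    (uniqueDiffOn_Icc one_pos).prod (uniqueDiffOn_univ.prod hUopen.uniqueDiffOn)
  have hD : ContDiffOn ℝ 1 (fderivWithin ℝ Fj S) S :=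
    hF.fderivWithin (m := 1) hSud (by norm_num)
  set incl : EuclideanSpace ℝ (Fin p) →L[ℝ] ℝ × ℝ × EuclideanSpace ℝ (Fin p) :=
    (0 : EuclideanSpace ℝ (Fin p) →L[ℝ] ℝ).prod
      ((0 : EuclideanSpace ℝ (Fin p) →L[ℝ] ℝ).prod
        (ContinuousLinearMap.id ℝ (EuclideanSpace ℝ (Fin p)))) with hincl
  set T : ((ℝ × ℝ × EuclideanSpace ℝ (Fin p)) →L[ℝ] ℝ) →L[ℝ] EuclideanSpace ℝ (Fin p) :=
    ((InnerProductSpace.toDual ℝ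
        (EuclideanSpace ℝ (Fin p))).symm.toContinuousLinearEquiv.toContinuousLinearMap).comp
      ((ContinuousLinearMap.compL ℝ (EuclideanSpace ℝ (Fin p))
        (ℝ × ℝ × EuclideanSpace ℝ (Fin p)) ℝ).flip incl) with hT
  refine ⟨fun q => T (fderivWithin ℝ Fj S q), T.contDiff.comp_contDiffOn hD, ?_⟩
  intro t ht y η hη
  have hq : ((t, y, η) : ℝ × ℝ × EuclideanSpace ℝ (Fin p)) ∈ S := ⟨ht, mem_univ _, hη⟩
  have hdiff : HasFDerivWithinAt Fj (fderivWithin ℝ Fj S (t, y, η)) S (t, y, η) :=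
    ((hF.differentiableOn (by norm_num)) _ hq).hasFDerivWithinAt
  have hι : HasFDerivAt
      (fun η' : EuclideanSpace ℝ (Fin p) => ((t, y, η') : ℝ × ℝ × EuclideanSpace ℝ (Fin p)))
      incl η :=
    HasFDerivAt.prodMk (hasFDerivAt_const t η) (HasFDerivAt.prodMk (hasFDerivAt_const y η) (hasFDerivAt_id η))
  have hmap : MapsTo
      (fun η' : EuclideanSpace ℝ (Fin p) => ((t, y, η') : ℝ × ℝ × EuclideanSpace ℝ (Fin p)))
      U S := fun η' hη' => ⟨ht, mem_univ _, hη'⟩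
  have hcomp : HasFDerivWithinAt (fun η' : EuclideanSpace ℝ (Fin p) => F t y η')
      ((fderivWithin ℝ Fj S (t, y, η)).comp incl) U η :=
    by have h := hdiff.comp η hι.hasFDerivWithinAt hmap; exact h
  have hgrad : HasFDerivWithinAt (fun η' : EuclideanSpace ℝ (Fin p) => F t y η')
      ((InnerProductSpace.toDual ℝ (EuclideanSpace ℝ (Fin p))) (Fθ t y η)) U η :=
    (hFθ t ht y η hη).hasFDerivAt.hasFDerivWithinAt
  have heq := (hUopen.uniqueDiffOn η hη).eq hgrad hcomp
  have hTq : T (fderivWithin ℝ Fj S (t, y, η))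
      = (InnerProductSpace.toDual ℝ (EuclideanSpace ℝ (Fin p))).symm
          ((fderivWithin ℝ Fj S (t, y, η)).comp incl) := rfl
  show T (fderivWithin ℝ Fj S (t, y, η)) = Fθ t y η
  rw [hTq, ← heq, LinearIsometryEquiv.symm_apply_apply]

set_option maxHeartbeats 1000000 in
/-- the exact algebraic identity `M(f,θ)(θ − θ₀) = T₁ + T₂ + T₃` obtained by
subtracting the first-order conditions satisfied by `(f, θ)` and `(f₀, θ₀)`. -/
theorem first_order_condition_difference_identity
    (p : ℕ) (U : Set (EuclideanSpace ℝ (Fin p)))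
    (hUopen : IsOpen U) (hUconv : Convex ℝ U)
    (w : ℝ → ℝ) (hw_cont : ContinuousOn w (Icc (0:ℝ) 1))
    (hw_nonneg : ∀ t ∈ Icc (0:ℝ) 1, 0 ≤ w t)
    (f f' f₀ f₀' : ℝ → ℝ)
    (hf : ∀ t ∈ Icc (0:ℝ) 1, HasDerivAt f (f' t) t)
    (hf'c : ContinuousOn f' (Icc (0:ℝ) 1))
    (hf₀ : ∀ t ∈ Icc (0:ℝ) 1, HasDerivAt f₀ (f₀' t) t)
    (hf₀'c : ContinuousOn f₀' (Icc (0:ℝ) 1))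
    (θ θ₀ : EuclideanSpace ℝ (Fin p)) (hθ : θ ∈ U) (hθ₀ : θ₀ ∈ U)
    (F : ℝ → ℝ → EuclideanSpace ℝ (Fin p) → ℝ)
    (hF : ContDiffOn ℝ 2 (fun q : ℝ × ℝ × EuclideanSpace ℝ (Fin p) => F q.1 q.2.1 q.2.2)
      (Icc (0:ℝ) 1 ×ˢ (univ : Set ℝ) ×ˢ U))
    -- `Fθ t y η` is the gradient of `F` in its third argument
    (Fθ : ℝ → ℝ → EuclideanSpace ℝ (Fin p) → EuclideanSpace ℝ (Fin p))
    (hFθ : ∀ t ∈ Icc (0:ℝ) 1, ∀ y : ℝ, ∀ η ∈ U,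
      HasGradientAt (fun η' => F t y η') (Fθ t y η) η)
    -- `DS t y η` is the Jacobian in `η` of `S (t, y, η) = ∇_θF (t, y, η) (f₀' t − F (t, f₀ t, θ₀))`
    (DS : ℝ → ℝ → EuclideanSpace ℝ (Fin p) →
      EuclideanSpace ℝ (Fin p) →L[ℝ] EuclideanSpace ℝ (Fin p))
    (hDS : ∀ t ∈ Icc (0:ℝ) 1, ∀ y : ℝ, ∀ η ∈ U,
      HasFDerivAt (fun η' => ((f₀' t - F t (f₀ t) θ₀) • Fθ t y η' : EuclideanSpace ℝ (Fin p)))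
        (DS t y η) η)
    -- the two first-order conditions
    (hfo : (∫ t in Icc (0:ℝ) 1, ((f' t - F t (f t) θ) * w t) • Fθ t (f t) θ)
      = (0 : EuclideanSpace ℝ (Fin p)))
    (hfo₀ : (∫ t in Icc (0:ℝ) 1, ((f₀' t - F t (f₀ t) θ₀) * w t) • Fθ t (f₀ t) θ₀)
      = (0 : EuclideanSpace ℝ (Fin p))) :
    (∫ t in Icc (0:ℝ) 1,
        (⟪(∫ l in Icc (0:ℝ) 1, Fθ t (f t) (θ + l • (θ₀ - θ))), θ - θ₀⟫ * w t) • Fθ t (f t) θ)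
      - (∫ t in Icc (0:ℝ) 1,
          w t • ((∫ l in Icc (0:ℝ) 1, DS t (f t) (θ₀ + l • (θ - θ₀))) (θ - θ₀)))
    = (∫ t in Icc (0:ℝ) 1,
        ((f₀' t - F t (f₀ t) θ₀) * w t) • (Fθ t (f t) θ₀ - Fθ t (f₀ t) θ₀))
      + (∫ t in Icc (0:ℝ) 1, ((f' t - f₀' t) * w t) • Fθ t (f t) θ)
      + (∫ t in Icc (0:ℝ) 1,
          ((F t (f₀ t) θ₀ - F t (f t) θ₀) * w t) • Fθ t (f t) θ) := by
  obtain ⟨Φ, hΦC1, hΦeq⟩ := grad_repr p U hUopen F hF Fθ hFθ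
  have hΦcont : ContinuousOn Φ (Icc (0:ℝ) 1 ×ˢ (univ : Set ℝ) ×ˢ U) := hΦC1.continuousOn
  have hfc : ContinuousOn f (Icc (0:ℝ) 1) :=
    fun t ht => (hf t ht).continuousAt.continuousWithinAt
  have hf₀c : ContinuousOn f₀ (Icc (0:ℝ) 1) :=
    fun t ht => (hf₀ t ht).continuousAt.continuousWithinAt
  -- segment membership
  have hseg : ∀ a b : EuclideanSpace ℝ (Fin p), a ∈ U → b ∈ U →
      ∀ l ∈ Icc (0:ℝ) 1, a + l • (b - a) ∈ U := by
    intro a b ha hb l hl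
    have h := hUconv ha hb (by linarith [hl.2] : (0:ℝ) ≤ 1 - l) hl.1 (by ring)
    have he : (1 - l) • a + l • b = a + l • (b - a) := by module
    rwa [he] at h
  -- lines have derivative
  have hline : ∀ (a d : EuclideanSpace ℝ (Fin p)) (l : ℝ),
      HasDerivAt (fun l : ℝ => a + l • d) d l := by
    intro a d l
    simpa using ((hasDerivAt_id l).smul_const d).const_add a
  -- continuity in t of F-compositions
  have hcF : ∀ y : ℝ → ℝ, ContinuousOn y (Icc (0:ℝ) 1) → ∀ η ∈ U,
      ContinuousOn (fun t => F t (y t) η) (Icc (0:ℝ) 1) := by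
    intro y hy η hη
    exact hF.continuousOn.comp
      (continuousOn_id.prodMk (hy.prodMk continuousOn_const))
      (fun t ht => ⟨ht, mem_univ _, hη⟩)
  have hcG : ∀ y : ℝ → ℝ, ContinuousOn y (Icc (0:ℝ) 1) → ∀ η ∈ U,
      ContinuousOn (fun t => Fθ t (y t) η) (Icc (0:ℝ) 1) := by
    intro y hy η hη
    have := hΦcont.comp
      (continuousOn_id.prodMk (hy.prodMk continuousOn_const))
      (fun t ht => ⟨ht, mem_univ _, hη⟩)
    exact this.congr (fun t ht => (hΦeq t ht (y t) η hη).symm)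
  -- Step A: pointwise value of the first inner integral
  have hA : ∀ t ∈ Icc (0:ℝ) 1,
      ⟪(∫ l in Icc (0:ℝ) 1, Fθ t (f t) (θ + l • (θ₀ - θ))), θ - θ₀⟫
        = F t (f t) θ - F t (f t) θ₀ := by
    intro t ht
    have hmem : ∀ l ∈ Icc (0:ℝ) 1, θ + l • (θ₀ - θ) ∈ U := hseg θ θ₀ hθ hθ₀
    have hg : ∀ l ∈ Icc (0:ℝ) 1, HasDerivAt (fun l : ℝ => F t (f t) (θ + l • (θ₀ - θ)))
        (⟪Fθ t (f t) (θ + l • (θ₀ - θ)), θ₀ - θ⟫) l := by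
      intro l hl
      have h1 := (hFθ t ht (f t) _ (hmem l hl)).hasFDerivAt
      have h2 := h1.comp_hasDerivAt l (hline θ (θ₀ - θ) l)
      simp [Function.comp, InnerProductSpace.toDual_apply_apply] at h2
      exact h2
    have hcont : ContinuousOn (fun l : ℝ => Fθ t (f t) (θ + l • (θ₀ - θ))) (Icc (0:ℝ) 1) := by
      have hmaps : MapsTo (fun l : ℝ =>
          ((t, f t, θ + l • (θ₀ - θ)) : ℝ × ℝ × EuclideanSpace ℝ (Fin p)))
          (Icc (0:ℝ) 1) (Icc (0:ℝ) 1 ×ˢ (univ : Set ℝ) ×ˢ U) :=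
        fun l hl => ⟨ht, mem_univ _, hmem l hl⟩
      have hc : ContinuousOn (fun l : ℝ =>
          ((t, f t, θ + l • (θ₀ - θ)) : ℝ × ℝ × EuclideanSpace ℝ (Fin p))) (Icc (0:ℝ) 1) :=
        (continuous_const.prodMk (continuous_const.prodMk
          (continuous_const.add (continuous_id.smul continuous_const)))).continuousOn
      exact (hΦcont.comp hc hmaps).congr
        (fun l hl => (hΦeq t ht (f t) _ (hmem l hl)).symm)
    have hint : IntegrableOn (fun l : ℝ => Fθ t (f t) (θ + l • (θ₀ - θ))) (Icc (0:ℝ) 1)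
        volume := hcont.integrableOn_compact isCompact_Icc
    have hFTC : (∫ l in (0:ℝ)..1, ⟪Fθ t (f t) (θ + l • (θ₀ - θ)), θ₀ - θ⟫)
        = F t (f t) (θ + (1:ℝ) • (θ₀ - θ)) - F t (f t) (θ + (0:ℝ) • (θ₀ - θ)) := by
      refine intervalIntegral.integral_eq_sub_of_hasDerivAt
        (f := fun l : ℝ => F t (f t) (θ + l • (θ₀ - θ))) (fun l hl => ?_) ?_
      · exact hg l (by rwa [uIcc_of_le zero_le_one] at hl)
      · apply ContinuousOn.intervalIntegrable
        rw [uIcc_of_le zero_le_one]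
        exact hcont.inner continuousOn_const
    calc ⟪(∫ l in Icc (0:ℝ) 1, Fθ t (f t) (θ + l • (θ₀ - θ))), θ - θ₀⟫
        = ⟪θ - θ₀, ∫ l in Icc (0:ℝ) 1, Fθ t (f t) (θ + l • (θ₀ - θ))⟫ := real_inner_comm _ _
      _ = ∫ l in Icc (0:ℝ) 1, ⟪θ - θ₀, Fθ t (f t) (θ + l • (θ₀ - θ))⟫ :=
          (integral_inner hint (θ - θ₀)).symm
      _ = ∫ l in Icc (0:ℝ) 1, -⟪Fθ t (f t) (θ + l • (θ₀ - θ)), θ₀ - θ⟫ := by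
          apply setIntegral_congr_fun measurableSet_Icc
          intro l _
          show ⟪θ - θ₀, Fθ t (f t) (θ + l • (θ₀ - θ))⟫
            = -⟪Fθ t (f t) (θ + l • (θ₀ - θ)), θ₀ - θ⟫
          rw [real_inner_comm, show θ - θ₀ = -(θ₀ - θ) from by abel, inner_neg_right]
      _ = -(∫ l in Icc (0:ℝ) 1, ⟪Fθ t (f t) (θ + l • (θ₀ - θ)), θ₀ - θ⟫) := integral_neg _
      _ = F t (f t) θ - F t (f t) θ₀ := by
          rw [integral_Icc_eq_integral_Ioc, ← intervalIntegral.integral_of_le zero_le_one,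
            hFTC]
          rw [show θ + (1:ℝ) • (θ₀ - θ) = θ₀ by module, show θ + (0:ℝ) • (θ₀ - θ) = θ by module]
          abel
  -- Step B: pointwise value of the second inner integral
  have hB : ∀ t ∈ Icc (0:ℝ) 1,
      ((∫ l in Icc (0:ℝ) 1, DS t (f t) (θ₀ + l • (θ - θ₀))) (θ - θ₀))
        = (f₀' t - F t (f₀ t) θ₀) • (Fθ t (f t) θ - Fθ t (f t) θ₀) := by
    intro t ht
    have hmem : ∀ l ∈ Icc (0:ℝ) 1, θ₀ + l • (θ - θ₀) ∈ U := hseg θ₀ θ hθ₀ hθ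
    -- continuity of `η ↦ DS t (f t) η` on `U`
    have hψ : ContDiffOn ℝ 1
        (fun η : EuclideanSpace ℝ (Fin p) => (f₀' t - F t (f₀ t) θ₀) • Φ (t, f t, η)) U := by
      have hι : ContDiff ℝ 1 (fun η : EuclideanSpace ℝ (Fin p) =>
          ((t, f t, η) : ℝ × ℝ × EuclideanSpace ℝ (Fin p))) :=
        ContDiff.prodMk contDiff_const (ContDiff.prodMk contDiff_const contDiff_id)
      exact (hΦC1.comp hι.contDiffOn (fun η hη => ⟨ht, mem_univ _, hη⟩)).const_smul _
    have hDSeq : ∀ η ∈ U, DS t (f t) η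
        = fderiv ℝ (fun η' : EuclideanSpace ℝ (Fin p) =>
            (f₀' t - F t (f₀ t) θ₀) • Φ (t, f t, η')) η := by
      intro η hη
      have h1 := hDS t ht (f t) η hη
      have h2 : (fun η' : EuclideanSpace ℝ (Fin p) =>
            (f₀' t - F t (f₀ t) θ₀) • Φ (t, f t, η'))
          =ᶠ[nhds η] (fun η' => (f₀' t - F t (f₀ t) θ₀) • Fθ t (f t) η') := by
        filter_upwards [hUopen.mem_nhds hη] with η' hη'
        rw [hΦeq t ht (f t) η' hη']
      exact ((h1.congr_of_eventuallyEq h2).fderiv).symm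
    have hDScont : ContinuousOn (fun η => DS t (f t) η) U :=
      ((hψ.continuousOn_fderiv_of_isOpen hUopen le_rfl).congr fun η hη => hDSeq η hη)
    have hcontl : ContinuousOn (fun l : ℝ => DS t (f t) (θ₀ + l • (θ - θ₀))) (Icc (0:ℝ) 1) :=
      hDScont.comp ((continuous_const.add (continuous_id.smul continuous_const)).continuousOn)
        (fun l hl => hmem l hl)
    have hint : IntegrableOn (fun l : ℝ => DS t (f t) (θ₀ + l • (θ - θ₀))) (Icc (0:ℝ) 1)
        volume := hcontl.integrableOn_compact isCompact_Icc
    rw [ContinuousLinearMap.integral_apply hint (θ - θ₀)]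
    have hg : ∀ l ∈ Icc (0:ℝ) 1, HasDerivAt
        (fun l : ℝ => (f₀' t - F t (f₀ t) θ₀) • Fθ t (f t) (θ₀ + l • (θ - θ₀)))
        ((DS t (f t) (θ₀ + l • (θ - θ₀))) (θ - θ₀)) l := by
      intro l hl
      have h := (hDS t ht (f t) _ (hmem l hl)).comp_hasDerivAt l (hline θ₀ (θ - θ₀) l)
      exact h
    have hFTC : (∫ l in (0:ℝ)..1, (DS t (f t) (θ₀ + l • (θ - θ₀))) (θ - θ₀))
        = (f₀' t - F t (f₀ t) θ₀) • Fθ t (f t) (θ₀ + (1:ℝ) • (θ - θ₀))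
          - (f₀' t - F t (f₀ t) θ₀) • Fθ t (f t) (θ₀ + (0:ℝ) • (θ - θ₀)) := by
      refine intervalIntegral.integral_eq_sub_of_hasDerivAt
        (f := fun l : ℝ => (f₀' t - F t (f₀ t) θ₀) • Fθ t (f t) (θ₀ + l • (θ - θ₀)))
        (fun l hl => ?_) ?_
      · exact hg l (by rwa [uIcc_of_le zero_le_one] at hl)
      · apply ContinuousOn.intervalIntegrable
        rw [uIcc_of_le zero_le_one]
        exact hcontl.clm_apply continuousOn_const
    rw [integral_Icc_eq_integral_Ioc, ← intervalIntegral.integral_of_le zero_le_one, hFTC,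
      show θ₀ + (1:ℝ) • (θ - θ₀) = θ by module, show θ₀ + (0:ℝ) • (θ - θ₀) = θ₀ by module,
      ← smul_sub]
  -- rewrite the two left-hand integrals
  have hX1 : (∫ t in Icc (0:ℝ) 1,
        (⟪(∫ l in Icc (0:ℝ) 1, Fθ t (f t) (θ + l • (θ₀ - θ))), θ - θ₀⟫ * w t) • Fθ t (f t) θ)
      = ∫ t in Icc (0:ℝ) 1, ((F t (f t) θ - F t (f t) θ₀) * w t) • Fθ t (f t) θ :=
    setIntegral_congr_fun measurableSet_Icc (fun t ht => by rw [hA t ht])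
  have hX2 : (∫ t in Icc (0:ℝ) 1,
        w t • ((∫ l in Icc (0:ℝ) 1, DS t (f t) (θ₀ + l • (θ - θ₀))) (θ - θ₀)))
      = ∫ t in Icc (0:ℝ) 1,
          ((f₀' t - F t (f₀ t) θ₀) * w t) • (Fθ t (f t) θ - Fθ t (f t) θ₀) :=
    setIntegral_congr_fun measurableSet_Icc (fun t ht => by
      rw [hB t ht, smul_smul, mul_comm])
  rw [hX1, hX2]
  -- integrability of all the integrands (they are continuous on the compact `Icc 0 1`)
  have hIA : IntegrableOn
      (fun t => ((F t (f t) θ - F t (f t) θ₀) * w t) • Fθ t (f t) θ) (Icc (0:ℝ) 1) volume :=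
    ((((hcF f hfc θ hθ).sub (hcF f hfc θ₀ hθ₀)).mul hw_cont).smul
      (hcG f hfc θ hθ)).integrableOn_compact isCompact_Icc
  have hIB : IntegrableOn
      (fun t => ((f₀' t - F t (f₀ t) θ₀) * w t) • (Fθ t (f t) θ - Fθ t (f t) θ₀))
      (Icc (0:ℝ) 1) volume :=
    (((hf₀'c.sub (hcF f₀ hf₀c θ₀ hθ₀)).mul hw_cont).smul
      ((hcG f hfc θ hθ).sub (hcG f hfc θ₀ hθ₀))).integrableOn_compact isCompact_Icc
  have hIC : IntegrableOn
      (fun t => ((f₀' t - F t (f₀ t) θ₀) * w t) • (Fθ t (f t) θ₀ - Fθ t (f₀ t) θ₀))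
      (Icc (0:ℝ) 1) volume :=
    (((hf₀'c.sub (hcF f₀ hf₀c θ₀ hθ₀)).mul hw_cont).smul
      ((hcG f hfc θ₀ hθ₀).sub (hcG f₀ hf₀c θ₀ hθ₀))).integrableOn_compact isCompact_Icc
  have hID : IntegrableOn
      (fun t => ((f' t - f₀' t) * w t) • Fθ t (f t) θ) (Icc (0:ℝ) 1) volume :=
    (((hf'c.sub hf₀'c).mul hw_cont).smul (hcG f hfc θ hθ)).integrableOn_compact isCompact_Icc
  have hIE : IntegrableOn
      (fun t => ((F t (f₀ t) θ₀ - F t (f t) θ₀) * w t) • Fθ t (f t) θ) (Icc (0:ℝ) 1) volume :=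
    ((((hcF f₀ hf₀c θ₀ hθ₀).sub (hcF f hfc θ₀ hθ₀)).mul hw_cont).smul
      (hcG f hfc θ hθ)).integrableOn_compact isCompact_Icc
  have hJ1 : IntegrableOn
      (fun t => ((f' t - F t (f t) θ) * w t) • Fθ t (f t) θ) (Icc (0:ℝ) 1) volume :=
    (((hf'c.sub (hcF f hfc θ hθ)).mul hw_cont).smul
      (hcG f hfc θ hθ)).integrableOn_compact isCompact_Icc
  have hJ2 : IntegrableOn
      (fun t => ((f₀' t - F t (f₀ t) θ₀) * w t) • Fθ t (f₀ t) θ₀) (Icc (0:ℝ) 1) volume :=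
    (((hf₀'c.sub (hcF f₀ hf₀c θ₀ hθ₀)).mul hw_cont).smul
      (hcG f₀ hf₀c θ₀ hθ₀)).integrableOn_compact isCompact_Icc
  have hICD : IntegrableOn
      (fun t => ((f₀' t - F t (f₀ t) θ₀) * w t) • (Fθ t (f t) θ₀ - Fθ t (f₀ t) θ₀)
        + ((f' t - f₀' t) * w t) • Fθ t (f t) θ) (Icc (0:ℝ) 1) volume := hIC.add hID
  have hICDE : IntegrableOn
      (fun t => (((f₀' t - F t (f₀ t) θ₀) * w t) • (Fθ t (f t) θ₀ - Fθ t (f₀ t) θ₀)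
          + ((f' t - f₀' t) * w t) • Fθ t (f t) θ)
        + ((F t (f₀ t) θ₀ - F t (f t) θ₀) * w t) • Fθ t (f t) θ) (Icc (0:ℝ) 1) volume :=
    hICD.add hIE
  have hIAB : IntegrableOn
      (fun t => ((F t (f t) θ - F t (f t) θ₀) * w t) • Fθ t (f t) θ
        - ((f₀' t - F t (f₀ t) θ₀) * w t) • (Fθ t (f t) θ - Fθ t (f t) θ₀))
      (Icc (0:ℝ) 1) volume := hIA.sub hIB
  -- the pointwise algebraic identity coming from subtracting the two first-order conditions
  have key : ∀ t : ℝ,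
      ((F t (f t) θ - F t (f t) θ₀) * w t) • Fθ t (f t) θ
        - ((f₀' t - F t (f₀ t) θ₀) * w t) • (Fθ t (f t) θ - Fθ t (f t) θ₀)
        - (((f₀' t - F t (f₀ t) θ₀) * w t) • (Fθ t (f t) θ₀ - Fθ t (f₀ t) θ₀)
            + ((f' t - f₀' t) * w t) • Fθ t (f t) θ
            + ((F t (f₀ t) θ₀ - F t (f t) θ₀) * w t) • Fθ t (f t) θ)
      = ((f₀' t - F t (f₀ t) θ₀) * w t) • Fθ t (f₀ t) θ₀
          - ((f' t - F t (f t) θ) * w t) • Fθ t (f t) θ := by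
    intro t
    module
  have e1 : (∫ t in Icc (0:ℝ) 1,
        (((F t (f t) θ - F t (f t) θ₀) * w t) • Fθ t (f t) θ
          - ((f₀' t - F t (f₀ t) θ₀) * w t) • (Fθ t (f t) θ - Fθ t (f t) θ₀)
          - (((f₀' t - F t (f₀ t) θ₀) * w t) • (Fθ t (f t) θ₀ - Fθ t (f₀ t) θ₀)
              + ((f' t - f₀' t) * w t) • Fθ t (f t) θ
              + ((F t (f₀ t) θ₀ - F t (f t) θ₀) * w t) • Fθ t (f t) θ)))
      = (∫ t in Icc (0:ℝ) 1, ((F t (f t) θ - F t (f t) θ₀) * w t) • Fθ t (f t) θ)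
        - (∫ t in Icc (0:ℝ) 1,
            ((f₀' t - F t (f₀ t) θ₀) * w t) • (Fθ t (f t) θ - Fθ t (f t) θ₀))
        - ((∫ t in Icc (0:ℝ) 1,
              ((f₀' t - F t (f₀ t) θ₀) * w t) • (Fθ t (f t) θ₀ - Fθ t (f₀ t) θ₀))
            + (∫ t in Icc (0:ℝ) 1, ((f' t - f₀' t) * w t) • Fθ t (f t) θ)
            + (∫ t in Icc (0:ℝ) 1,
                ((F t (f₀ t) θ₀ - F t (f t) θ₀) * w t) • Fθ t (f t) θ)) := by
    rw [integral_sub hIAB hICDE, integral_sub hIA hIB,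
      integral_add hICD hIE, integral_add hIC hID]
  have e2 : (∫ t in Icc (0:ℝ) 1,
        (((F t (f t) θ - F t (f t) θ₀) * w t) • Fθ t (f t) θ
          - ((f₀' t - F t (f₀ t) θ₀) * w t) • (Fθ t (f t) θ - Fθ t (f t) θ₀)
          - (((f₀' t - F t (f₀ t) θ₀) * w t) • (Fθ t (f t) θ₀ - Fθ t (f₀ t) θ₀)
              + ((f' t - f₀' t) * w t) • Fθ t (f t) θ
              + ((F t (f₀ t) θ₀ - F t (f t) θ₀) * w t) • Fθ t (f t) θ)))
      = ∫ t in Icc (0:ℝ) 1,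
          (((f₀' t - F t (f₀ t) θ₀) * w t) • Fθ t (f₀ t) θ₀
            - ((f' t - F t (f t) θ) * w t) • Fθ t (f t) θ) :=
    setIntegral_congr_fun measurableSet_Icc (fun t _ => key t)
  have e3 : (∫ t in Icc (0:ℝ) 1,
        (((f₀' t - F t (f₀ t) θ₀) * w t) • Fθ t (f₀ t) θ₀
          - ((f' t - F t (f t) θ) * w t) • Fθ t (f t) θ))
      = (0 : EuclideanSpace ℝ (Fin p)) := by
    rw [integral_sub hJ2 hJ1, hfo₀, hfo, sub_zero]
  have hz : (∫ t in Icc (0:ℝ) 1, ((F t (f t) θ - F t (f t) θ₀) * w t) • Fθ t (f t) θ)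
      - (∫ t in Icc (0:ℝ) 1,
          ((f₀' t - F t (f₀ t) θ₀) * w t) • (Fθ t (f t) θ - Fθ t (f t) θ₀))
      - ((∫ t in Icc (0:ℝ) 1,
            ((f₀' t - F t (f₀ t) θ₀) * w t) • (Fθ t (f t) θ₀ - Fθ t (f₀ t) θ₀))
          + (∫ t in Icc (0:ℝ) 1, ((f' t - f₀' t) * w t) • Fθ t (f t) θ)
          + (∫ t in Icc (0:ℝ) 1,
              ((F t (f₀ t) θ₀ - F t (f t) θ₀) * w t) • Fθ t (f t) θ))
      = 0 := by
    rw [← e1, e2, e3]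
  exact sub_eq_zero.mp hz
end

section
/- Let Σ be a real symmetric positive definite K×K matrix and let c ≥ 0. Let Σ^{-1/2} denote the inverse of the unique symmetric positive definite square root of Σ, and similarly (Σ + cΣ²)^{-1/2}. Then the matrix A = Σ^{-1/2} − (Σ + cΣ²)^{-1/2} is symmetric positive semidefinite, and every entry of A satisfies |A_{jk}| ≤ (c/2) · √(λ_max(Σ)), where λ_max(Σ) is the largest eigenvalue of Σ. -/
open Matrix in
private lemma scalar_bound (a b c : ℝ) (ha : 0 < a) (hab : a ≤ b) (hc : 0 ≤ c)
    (hsq : b ^ 2 = a ^ 2 + c * a ^ 4) : a⁻¹ - b⁻¹ ≤ c / 2 * a := by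
  have hb : 0 < b := lt_of_lt_of_le ha hab
  rw [inv_eq_one_div, inv_eq_one_div, div_sub_div _ _ (ne_of_gt ha) (ne_of_gt hb),
    div_le_iff₀ (mul_pos ha hb)]
  nlinarith [mul_nonneg (mul_nonneg (mul_nonneg hc (sq_nonneg a)) (sub_nonneg.2 hab))
      (by positivity : (0:ℝ) ≤ b + 2 * a), mul_pos ha hb, sq_nonneg (b - a)]

private lemma cs_bound {K : ℕ} (u v e : Fin K → ℝ) (M : ℝ) (hM : 0 ≤ M)
    (he : ∀ i, 0 ≤ e i) (heM : ∀ i, e i ≤ M)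
    (hu : ∑ i, u i ^ 2 = 1) (hv : ∑ i, v i ^ 2 = 1) :
    |∑ i, e i * u i * v i| ≤ M := by
  have h1 : ∑ i, |u i| * |v i| ≤ 1 := by
    have h2 := Finset.sum_mul_sq_le_sq_mul_sq Finset.univ (fun i => |u i|) (fun i => |v i|)
    simp only [sq_abs] at h2
    rw [hu, hv, mul_one] at h2
    have h3 : 0 ≤ ∑ i, |u i| * |v i| :=
      Finset.sum_nonneg fun i _ => mul_nonneg (abs_nonneg _) (abs_nonneg _)
    nlinarith
  calc |∑ i, e i * u i * v i| ≤ ∑ i, |e i * u i * v i| := Finset.abs_sum_le_sum_abs _ _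
    _ ≤ ∑ i, M * (|u i| * |v i|) := by
        refine Finset.sum_le_sum fun i _ => ?_
        rw [abs_mul, abs_mul, abs_of_nonneg (he i), mul_assoc]
        exact mul_le_mul_of_nonneg_right (heM i) (by positivity)
    _ = M * ∑ i, |u i| * |v i| := by rw [Finset.mul_sum]
    _ ≤ M * 1 := mul_le_mul_of_nonneg_left h1 hM
    _ = M := mul_one M

private noncomputable def cd {K : ℕ} (U : Matrix (Fin K) (Fin K) ℝ) (v : Fin K → ℝ) :
    Matrix (Fin K) (Fin K) ℝ :=
  U * Matrix.diagonal v * star U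

private lemma cd_mul {K : ℕ} {U : Matrix (Fin K) (Fin K) ℝ} (hU1 : star U * U = 1)
    (v w : Fin K → ℝ) : cd U v * cd U w = cd U (v * w) := by
  unfold cd
  have h : star U * (U * (Matrix.diagonal w * star U)) = Matrix.diagonal w * star U := by
    rw [← mul_assoc, hU1, one_mul]
  simp only [mul_assoc, h]
  rw [← mul_assoc (Matrix.diagonal v), Matrix.diagonal_mul_diagonal]
  rfl

private lemma cd_psd {K : ℕ} (U : Matrix (Fin K) (Fin K) ℝ) {v : Fin K → ℝ}
    (hv : ∀ i, 0 ≤ v i) : (cd U v).PosSemidef := by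
  have h : (Matrix.diagonal v).PosSemidef := Matrix.posSemidef_diagonal_iff.mpr hv
  have := h.mul_mul_conjTranspose_same U
  simpa [cd, Matrix.star_eq_conjTranspose, mul_assoc] using this

private lemma cd_sub {K : ℕ} (U : Matrix (Fin K) (Fin K) ℝ) (v w : Fin K → ℝ) :
    cd U v - cd U w = cd U (v - w) := by
  unfold cd
  have hd : Matrix.diagonal (v - w) = Matrix.diagonal v - Matrix.diagonal w := by
    rw [Matrix.diagonal_sub]; rfl
  rw [hd, mul_sub, sub_mul]

private lemma cd_add_smul {K : ℕ} (U : Matrix (Fin K) (Fin K) ℝ) (c : ℝ) (v w : Fin K → ℝ) :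
    cd U v + c • cd U w = cd U (v + c • w) := by
  unfold cd
  have hd : Matrix.diagonal (v + c • w) = Matrix.diagonal v + c • Matrix.diagonal w := by
    rw [← Matrix.diagonal_smul, Matrix.diagonal_add]; rfl
  rw [hd, mul_add, add_mul, mul_smul_comm, smul_mul_assoc]

private lemma cd_one {K : ℕ} {U : Matrix (Fin K) (Fin K) ℝ} (hU2 : U * star U = 1) :
    cd U 1 = 1 := by
  unfold cd
  have hd : Matrix.diagonal (1 : Fin K → ℝ) = 1 := Matrix.diagonal_one
  rw [hd, mul_one, hU2]

private lemma cd_apply {K : ℕ} (U : Matrix (Fin K) (Fin K) ℝ) (v : Fin K → ℝ) (j k : Fin K) :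
    cd U v j k = ∑ i, v i * U j i * U k i := by
  unfold cd
  rw [Matrix.mul_apply]
  refine Finset.sum_congr rfl fun i _ => ?_
  rw [Matrix.mul_diagonal, Matrix.star_eq_conjTranspose, Matrix.conjTranspose_apply]
  simp only [star_trivial]
  ring

/-- for a symmetric positive definite `Σ` and `c ≥ 0`, the matrix
`A = Σ^{-1/2} − (Σ + cΣ²)^{-1/2}` is positive semidefinite and every entry satisfies
`|A j k| ≤ (c/2) √(λ_max(Σ))`. Here `R` and `S` are the (unique) symmetric positive
definite square roots of `Σ` and `Σ + cΣ²` respectively. -/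
theorem inv_sqrt_entry_bound
    (K : ℕ) (hK : 0 < K)
    (Sig : Matrix (Fin K) (Fin K) ℝ) (hSig : Sig.PosDef)
    (c : ℝ) (hc : 0 ≤ c)
    (R S : Matrix (Fin K) (Fin K) ℝ)
    (hRpd : R.PosDef) (hRsq : R * R = Sig)
    (hSpd : S.PosDef) (hSsq : S * S = Sig + c • (Sig * Sig)) :
    (R⁻¹ - S⁻¹).PosSemidef ∧
      ∀ j k, |(R⁻¹ - S⁻¹) j k| ≤
        (c / 2) * Real.sqrt (⨆ i, hSig.isHermitian.eigenvalues i) := by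
  classical
  set μ : Fin K → ℝ := hSig.isHermitian.eigenvalues with hμ
  set U : Matrix (Fin K) (Fin K) ℝ := ↑hSig.isHermitian.eigenvectorUnitary with hUdef
  have hμpos : ∀ i, 0 < μ i := fun i => hSig.eigenvalues_pos i
  have hU1 : star U * U = 1 := hSig.isHermitian.eigenvectorUnitary.2.1
  have hU2 : U * star U = 1 := hSig.isHermitian.eigenvectorUnitary.2.2
  have hspec : Sig = cd U μ := by
    have := hSig.isHermitian.spectral_theorem
    rwa [RCLike.ofReal_real_eq_id, Function.id_comp] at this
  have hcpos : ∀ i, (0:ℝ) < μ i + c * μ i ^ 2 := by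
    intro i; nlinarith [hμpos i, sq_nonneg (μ i)]
  -- identify R
  have hRm : R = cd U (fun i => Real.sqrt (μ i)) := by
    open scoped MatrixOrder in
    refine (CFC.sq_eq_sq_iff _ _ (Matrix.nonneg_iff_posSemidef.mpr hRpd.posSemidef)
      (Matrix.nonneg_iff_posSemidef.mpr (cd_psd U fun i => Real.sqrt_nonneg _))).mp ?_
    rw [pow_two, pow_two, hRsq, cd_mul hU1]
    have h : (fun i => Real.sqrt (μ i)) * (fun i => Real.sqrt (μ i)) = μ := by
      funext i; exact Real.mul_self_sqrt (hμpos i).le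
    rw [h, ← hspec]
  -- identify S
  have hSm : S = cd U (fun i => Real.sqrt (μ i + c * μ i ^ 2)) := by
    open scoped MatrixOrder in
    refine (CFC.sq_eq_sq_iff _ _ (Matrix.nonneg_iff_posSemidef.mpr hSpd.posSemidef)
      (Matrix.nonneg_iff_posSemidef.mpr (cd_psd U fun i => Real.sqrt_nonneg _))).mp ?_
    rw [pow_two, pow_two, hSsq, cd_mul hU1]
    have h1 : (fun i => Real.sqrt (μ i + c * μ i ^ 2)) *
        (fun i => Real.sqrt (μ i + c * μ i ^ 2)) = fun i => μ i + c * μ i ^ 2 := by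
      funext i; exact Real.mul_self_sqrt (hcpos i).le
    rw [h1, hspec, cd_mul hU1, cd_add_smul]
    refine congrArg (cd U) ?_
    funext i
    show μ i + c * (μ i * μ i) = μ i + c * μ i ^ 2
    ring
  -- inverses
  have hRinv : R⁻¹ = cd U (fun i => (Real.sqrt (μ i))⁻¹) := by
    apply Matrix.inv_eq_right_inv
    rw [hRm, cd_mul hU1]
    have h : (fun i => Real.sqrt (μ i)) * (fun i => (Real.sqrt (μ i))⁻¹) = 1 := by
      funext i
      exact mul_inv_cancel₀ (Real.sqrt_ne_zero'.mpr (hμpos i))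
    rw [h, cd_one hU2]
  have hSinv : S⁻¹ = cd U (fun i => (Real.sqrt (μ i + c * μ i ^ 2))⁻¹) := by
    apply Matrix.inv_eq_right_inv
    rw [hSm, cd_mul hU1]
    have h : (fun i => Real.sqrt (μ i + c * μ i ^ 2)) *
        (fun i => (Real.sqrt (μ i + c * μ i ^ 2))⁻¹) = 1 := by
      funext i
      exact mul_inv_cancel₀ (Real.sqrt_ne_zero'.mpr (hcpos i))
    rw [h, cd_one hU2]
  set e : Fin K → ℝ :=
    fun i => (Real.sqrt (μ i))⁻¹ - (Real.sqrt (μ i + c * μ i ^ 2))⁻¹ with he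
  have hdiff : R⁻¹ - S⁻¹ = cd U e := by rw [hRinv, hSinv, cd_sub]; rfl
  -- facts about e
  have hab : ∀ i, Real.sqrt (μ i) ≤ Real.sqrt (μ i + c * μ i ^ 2) :=
    fun i => Real.sqrt_le_sqrt (by nlinarith [sq_nonneg (μ i)])
  have henn : ∀ i, 0 ≤ e i := by
    intro i
    have h1 : 0 < Real.sqrt (μ i) := Real.sqrt_pos.mpr (hμpos i)
    simp only [he, sub_nonneg]
    exact inv_anti₀ h1 (hab i)
  set lmax : ℝ := ⨆ i, μ i with hlmax
  have hμle : ∀ i, μ i ≤ lmax :=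
    fun i => le_ciSup (Set.Finite.bddAbove (Set.finite_range μ)) i
  set Mb : ℝ := c / 2 * Real.sqrt lmax with hMb
  have hMbnn : 0 ≤ Mb := by positivity
  have heM : ∀ i, e i ≤ Mb := by
    intro i
    have h1 : 0 < Real.sqrt (μ i) := Real.sqrt_pos.mpr (hμpos i)
    have h2 : (Real.sqrt (μ i + c * μ i ^ 2)) ^ 2 =
        (Real.sqrt (μ i)) ^ 2 + c * (Real.sqrt (μ i)) ^ 4 := by
      rw [Real.sq_sqrt (hcpos i).le]
      have h3 : (Real.sqrt (μ i)) ^ 4 = ((Real.sqrt (μ i)) ^ 2) ^ 2 := by ring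
      rw [h3, Real.sq_sqrt (hμpos i).le]
    calc e i ≤ c / 2 * Real.sqrt (μ i) := scalar_bound _ _ c h1 (hab i) hc h2
      _ ≤ Mb := by
          exact mul_le_mul_of_nonneg_left (Real.sqrt_le_sqrt (hμle i)) (by positivity)
  constructor
  · rw [hdiff]; exact cd_psd U henn
  · intro j k
    rw [hdiff, cd_apply]
    have hrow : ∀ j : Fin K, ∑ i, (U j i) ^ 2 = 1 := by
      intro j
      have h := congrFun (congrFun hU2 j) j
      rw [Matrix.mul_apply, Matrix.one_apply_eq] at h
      rw [← h]
      refine Finset.sum_congr rfl fun i _ => ?_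
      rw [Matrix.star_eq_conjTranspose, Matrix.conjTranspose_apply]
      simp only [star_trivial]
      ring
    exact cs_bound (fun i => U j i) (fun i => U k i) e Mb hMbnn henn heM (hrow j) (hrow k)
end
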